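/- Let Δ be a k×k Hermitian positive semidefinite complex matrix, P a k×k diagonal matrix with nonnegative real diagonal entries, C₀ an N×N Hermitian positive semidefinite complex matrix with top-left entry c₀₀ = (C₀)_{0,0}, let J₀ = e₀ e₀† be the N×N matrix with a single 1 in position (0,0), and let s ≥ 0 be real. Then the matrix s·(Δ⊗C₀)(P⊗J₀) + I_{kN} is invertible and (P⊗J₀) · ( s·(Δ⊗C₀)(P⊗J₀) + I_{kN} )^{-1} = ( P (I_k + s·c₀₀·Δ P)^{-1} ) ⊗ J₀. -/

import Mathlib

open Matrix Kronecker ComplexOrder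

/-- Let `Δ` be a `k × k` Hermitian positive semidefinite complex matrix, `P` a `k × k`
diagonal matrix with nonnegative real diagonal entries, `C₀` an `N × N` Hermitian positive
semidefinite complex matrix with top-left entry `c₀₀ = C₀ 0 0`, `J₀ = e₀ e₀†`, and `s ≥ 0`.
Then `s (Δ⊗C₀)(P⊗J₀) + I` is invertible and
`(P⊗J₀) (s (Δ⊗C₀)(P⊗J₀) + I)⁻¹ = (P (I + s c₀₀ Δ P)⁻¹) ⊗ J₀`. -/
theorem kronecker_single_bin_inverse (k N : ℕ) [NeZero N]
    (Δ : Matrix (Fin k) (Fin k) ℂ) (hΔ : Δ.PosSemidef)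
    (P : Fin k → ℝ) (hP : ∀ a, 0 ≤ P a)
    (C₀ : Matrix (Fin N) (Fin N) ℂ) (hC₀ : C₀.PosSemidef)
    (s : ℝ) (hs : 0 ≤ s) :
    IsUnit ((s : ℂ) • ((Δ ⊗ₖ C₀) * ((Matrix.diagonal fun a => (P a : ℂ))
          ⊗ₖ Matrix.single (0 : Fin N) (0 : Fin N) 1)) + 1) ∧
      ((Matrix.diagonal fun a => (P a : ℂ)) ⊗ₖ Matrix.single (0 : Fin N) (0 : Fin N) 1)
          * ((s : ℂ) • ((Δ ⊗ₖ C₀) * ((Matrix.diagonal fun a => (P a : ℂ))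
              ⊗ₖ Matrix.single (0 : Fin N) (0 : Fin N) 1)) + 1)⁻¹
        = ((Matrix.diagonal fun a => (P a : ℂ))
              * (1 + ((s : ℂ) * C₀ 0 0) • (Δ * Matrix.diagonal fun a => (P a : ℂ)))⁻¹)
            ⊗ₖ Matrix.single (0 : Fin N) (0 : Fin N) 1 := by
  set D : Matrix (Fin k) (Fin k) ℂ := Matrix.diagonal fun a => (P a : ℂ) with hD
  set J : Matrix (Fin N) (Fin N) ℂ := Matrix.single (0 : Fin N) (0 : Fin N) 1 with hJ
  set c : ℂ := C₀ 0 0 with hc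
  set A : Matrix (Fin k) (Fin k) ℂ := Δ * D with hA
  set B : Matrix (Fin N) (Fin N) ℂ := C₀ * J with hB
  set K : Matrix (Fin k) (Fin k) ℂ := 1 + ((s : ℂ) * c) • A with hK
  -- c is a nonnegative real
  have hc0 : 0 ≤ c := by
    have := hC₀.dotProduct_mulVec_nonneg (Pi.single 0 1)
    simpa [Matrix.mulVec_single, dotProduct, Pi.single_apply] using this
  have hcim : c.im = 0 := ((Complex.le_def).mp hc0).2.symm
  have hcre : 0 ≤ c.re := by simpa using ((Complex.le_def).mp hc0).1
  have hcr : c = ((c.re : ℝ) : ℂ) := by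
    apply Complex.ext <;> simp [hcim]
  -- invertibility of K
  have hKdet : IsUnit K.det := by
    set E : Matrix (Fin k) (Fin k) ℂ :=
      Matrix.diagonal fun a => ((Real.sqrt (s * c.re * P a) : ℝ) : ℂ) with hE
    have hEE : E * E = ((s : ℂ) * c) • D := by
      rw [hE, Matrix.diagonal_mul_diagonal, hD, ← Matrix.diagonal_smul]
      refine congrArg Matrix.diagonal (funext fun a => ?_)
      have h0 : (0:ℝ) ≤ s * c.re * P a := mul_nonneg (mul_nonneg hs hcre) (hP a)
      rw [Pi.smul_apply, smul_eq_mul, ← Complex.ofReal_mul, Real.mul_self_sqrt h0]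
      push_cast [← hcr]
      ring
    have hKE : K = 1 + (Δ * E) * E := by
      rw [hK, Matrix.mul_assoc, hEE, hA, Matrix.mul_smul]
    have hEH : Eᴴ = E := by
      rw [hE, Matrix.diagonal_conjTranspose]
      exact congrArg Matrix.diagonal (funext fun a => by
        simp [Pi.star_apply, Complex.star_def, Complex.conj_ofReal])
    have hpsd : (E * Δ * E).PosSemidef := by
      have := hΔ.conjTranspose_mul_mul_same E
      rwa [hEH] at this
    have hpd : (1 + E * Δ * E).PosDef := Matrix.PosDef.one.add_posSemidef hpsd
    rw [hKE, Matrix.det_one_add_mul_comm, ← Matrix.mul_assoc]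
    exact hpd.det_pos.ne'.isUnit
  have hKinv : K * K⁻¹ = 1 := Matrix.mul_nonsing_inv _ hKdet
  -- structure of B and J products
  have hBB : B * B = c • B := by
    rw [hB, hJ, hc]
    ext i j
    simp [Matrix.mul_apply, Matrix.single, Finset.mul_sum, ite_and, Matrix.smul_apply]
    split_ifs <;> simp [mul_comm]
  have hJB : J * B = c • J := by
    rw [hB, hJ, hc]
    ext i j
    simp [Matrix.mul_apply, Matrix.single, Finset.mul_sum, ite_and, Matrix.smul_apply]
    split_ifs <;> simp
  -- the big matrix
  have hprod : (Δ ⊗ₖ C₀) * (D ⊗ₖ J) = A ⊗ₖ B := by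
    rw [hA, hB, Matrix.mul_kronecker_mul]
  set G : Matrix (Fin k) (Fin k) ℂ := A * K⁻¹ with hG
  set Y : Matrix (Fin k × Fin N) (Fin k × Fin N) ℂ := 1 - (s : ℂ) • (G ⊗ₖ B) with hY
  -- key identity on the k-side
  have hkeyk : (s : ℂ) • A = (s : ℂ) • G + ((s : ℂ) * ((s : ℂ) * c)) • (A * G) := by
    have h1 : (s : ℂ) • G + ((s : ℂ) * ((s : ℂ) * c)) • (A * G)
        = (((s : ℂ) • A) * K) * K⁻¹ := by
      rw [hK, hG]
      simp only [Matrix.mul_add, Matrix.add_mul, Matrix.mul_one, Matrix.one_mul,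
        Matrix.smul_mul, Matrix.mul_smul, smul_smul, Matrix.mul_assoc]
      module
    rw [h1, Matrix.mul_assoc, hKinv, Matrix.mul_one]
  have hkey : (s : ℂ) • (A ⊗ₖ B)
      = (s : ℂ) • (G ⊗ₖ B) + ((s : ℂ) * ((s : ℂ) * c)) • ((A * G) ⊗ₖ B) := by
    have := congrArg (fun M => M ⊗ₖ B) hkeyk
    simpa only [Matrix.smul_kronecker, Matrix.add_kronecker] using this
  have hGB : (A ⊗ₖ B) * (G ⊗ₖ B) = c • ((A * G) ⊗ₖ B) := by
    rw [← Matrix.mul_kronecker_mul, hBB, Matrix.kronecker_smul]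
  have hXY : ((s : ℂ) • (A ⊗ₖ B) + 1) * Y = 1 := by
    rw [hY]
    simp only [Matrix.mul_sub, Matrix.mul_one, Matrix.mul_smul, Matrix.add_mul,
      Matrix.one_mul, Matrix.smul_mul, hGB]
    rw [hkey]
    simp only [smul_smul, smul_add]
    module
  have hYX : Y * ((s : ℂ) • (A ⊗ₖ B) + 1) = 1 := mul_eq_one_comm.mp hXY
  have hunit : IsUnit ((s : ℂ) • (A ⊗ₖ B) + 1) := ⟨⟨_, Y, hXY, hYX⟩, rfl⟩
  have hinv : ((s : ℂ) • (A ⊗ₖ B) + 1)⁻¹ = Y := Matrix.inv_eq_right_inv hXY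
  refine ⟨by rw [hprod]; exact hunit, ?_⟩
  rw [hprod, hinv, hY]
  -- k-side identity for D
  have hDk : D = D * K⁻¹ + ((s : ℂ) * c) • (D * G) := by
    have h1 : D * K⁻¹ + ((s : ℂ) * c) • (D * G) = (D * K) * K⁻¹ := by
      rw [hK, hG]
      simp only [Matrix.mul_add, Matrix.add_mul, Matrix.mul_one, Matrix.one_mul,
        Matrix.smul_mul, Matrix.mul_smul, smul_smul, Matrix.mul_assoc]
      rfl
    rw [h1, Matrix.mul_assoc, hKinv, Matrix.mul_one]
  have hDJ : (D ⊗ₖ J) * (G ⊗ₖ B) = c • ((D * G) ⊗ₖ J) := by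
    rw [← Matrix.mul_kronecker_mul, hJB, Matrix.kronecker_smul]
  rw [Matrix.mul_sub, Matrix.mul_one, Matrix.mul_smul, hDJ]
  have hDJ2 : D ⊗ₖ J = (D * K⁻¹) ⊗ₖ J + ((s : ℂ) * c) • ((D * G) ⊗ₖ J) := by
    have := congrArg (fun M => M ⊗ₖ J) hDk
    simpa only [Matrix.smul_kronecker, Matrix.add_kronecker] using this
  rw [hDJ2]
  simp only [smul_smul]
  module
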